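/- With the convention π_0 = 0, for 1 ≤ m ≤ n-1, the number of permutations of {1,...,n} with peak set exactly {n-m} equals Σ_{i=0}^{m-1} 2^i·C(n-(m-i), i+1). -/

import Mathlib

open Finset

/-- Value at (1-indexed) position `i` of the signed permutation represented by a pair
`(σ, ε)`: the value is `±(σ(i)+1)`, negative iff `ε i = true`. Returns 0 out of range. -/
def bval (n : ℕ) (π : Equiv.Perm (Fin n) × (Fin n → Bool)) (i : ℕ) : ℤ :=
  if h : i - 1 < n then
    (if π.2 ⟨i - 1, h⟩ then (-1 : ℤ) else 1) * (((π.1 ⟨i - 1, h⟩ : ℕ) : ℤ) + 1)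
  else 0

/-- Peak set of a signed permutation: positions `i ∈ {2,…,n-1}` with `π_{i-1} < π_i > π_{i+1}`. -/
def bPeakSet (n : ℕ) (π : Equiv.Perm (Fin n) × (Fin n → Bool)) : Finset ℕ :=
  (Finset.Icc 2 (n - 1)).filter fun i =>
    bval n π (i - 1) < bval n π i ∧ bval n π (i + 1) < bval n π i

/-- `#P_B(S,n)`: number of signed permutations in `B_n` with peak set exactly `S`. -/
def PB (n : ℕ) (S : Finset ℕ) : ℕ :=
  (Finset.univ.filter fun π : Equiv.Perm (Fin n) × (Fin n → Bool) => bPeakSet n π = S).card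

/-- Value with the convention `π_0 = 0`. -/
def bvalHat (n : ℕ) (π : Equiv.Perm (Fin n) × (Fin n → Bool)) (i : ℕ) : ℤ :=
  if i = 0 then 0 else bval n π i

/-- Peak set with `π_0 = 0`: positions `i ∈ {1,…,n-1}` with `π_{i-1} < π_i > π_{i+1}`. -/
def bPeakSetHat (n : ℕ) (π : Equiv.Perm (Fin n) × (Fin n → Bool)) : Finset ℕ :=
  (Finset.Icc 1 (n - 1)).filter fun i =>
    bvalHat n π (i - 1) < bvalHat n π i ∧ bvalHat n π (i + 1) < bvalHat n π i

/-- `#P̂_B(S,n)`: signed permutations with `π_0 = 0` prepended and peak set exactly `S`. -/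
def PBhat (n : ℕ) (S : Finset ℕ) : ℕ :=
  (Finset.univ.filter fun π : Equiv.Perm (Fin n) × (Fin n → Bool) => bPeakSetHat n π = S).card

/-- Value at (1-indexed) position `i` of an ordinary permutation of `{1,…,n}`. -/
def sval (n : ℕ) (π : Equiv.Perm (Fin n)) (i : ℕ) : ℤ :=
  if h : i - 1 < n then ((π ⟨i - 1, h⟩ : ℕ) : ℤ) + 1 else 0

/-- Peak set of an ordinary permutation: positions `i ∈ {2,…,n-1}`. -/
def sPeakSet (n : ℕ) (π : Equiv.Perm (Fin n)) : Finset ℕ :=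
  (Finset.Icc 2 (n - 1)).filter fun i =>
    sval n π (i - 1) < sval n π i ∧ sval n π (i + 1) < sval n π i

/-- `#P(S,n)`: number of permutations of `{1,…,n}` with peak set exactly `S`. -/
def PP (n : ℕ) (S : Finset ℕ) : ℕ :=
  (Finset.univ.filter fun π : Equiv.Perm (Fin n) => sPeakSet n π = S).card

def svalHat (n : ℕ) (π : Equiv.Perm (Fin n)) (i : ℕ) : ℤ :=
  if i = 0 then 0 else sval n π i

/-- Peak set with the convention `π_0 = 0`: positions `i ∈ {1,…,n-1}`. -/
def sPeakSetHat (n : ℕ) (π : Equiv.Perm (Fin n)) : Finset ℕ :=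
  (Finset.Icc 1 (n - 1)).filter fun i =>
    svalHat n π (i - 1) < svalHat n π i ∧ svalHat n π (i + 1) < svalHat n π i

/-- `#P̂(S,n)`: permutations of `{1,…,n}` with `π_0 = 0` prepended and peak set exactly `S`. -/
def PPhat (n : ℕ) (S : Finset ℕ) : ℕ :=
  (Finset.univ.filter fun π : Equiv.Perm (Fin n) => sPeakSetHat n π = S).card

namespace Stmt18

/-- 0-indexed word of a permutation, as naturals. -/
def wd (n : ℕ) (π : Equiv.Perm (Fin n)) (p : ℕ) : ℕ := if h : p < n then π ⟨p, h⟩ else 0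

lemma wd_lt {n : ℕ} (π : Equiv.Perm (Fin n)) {p : ℕ} (hp : p < n) : wd n π p < n := by
  simp [wd, hp]

lemma wd_inj {n : ℕ} (π : Equiv.Perm (Fin n)) {p q : ℕ} (hp : p < n) (hq : q < n)
    (h : wd n π p = wd n π q) : p = q := by
  simp only [wd, dif_pos hp, dif_pos hq] at h
  have := π.injective (Fin.ext h)
  exact congrArg Fin.val this

lemma wd_surj {n : ℕ} (π : Equiv.Perm (Fin n)) {v : ℕ} (hv : v < n) :
    ∃ p, p < n ∧ wd n π p = v := by
  refine ⟨π.symm ⟨v, hv⟩, (π.symm ⟨v, hv⟩).isLt, ?_⟩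
  simp [wd, (π.symm ⟨v, hv⟩).isLt]

/-- Peak-set condition, in terms of the 0-indexed natural word. -/
def PkCond (n k : ℕ) (u : ℕ → ℕ) : Prop :=
  ∀ t, 1 ≤ t → t ≤ n - 1 → (((t = 1 ∨ u (t-2) < u (t-1)) ∧ u t < u (t-1)) ↔ t = k)

lemma peakset_iff {n k : ℕ} (π : Equiv.Perm (Fin n)) (hk1 : 1 ≤ k) (hkn : k < n) :
    sPeakSetHat n π = {k} ↔ PkCond n k (wd n π) := by
  have hkIcc : k ∈ Finset.Icc 1 (n-1) := by
    simp only [Finset.mem_Icc]; omega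
  have key : ∀ t, 1 ≤ t → t ≤ n - 1 →
      ((svalHat n π (t-1) < svalHat n π t ∧ svalHat n π (t+1) < svalHat n π t) ↔
       ((t = 1 ∨ wd n π (t-2) < wd n π (t-1)) ∧ wd n π t < wd n π (t-1))) := by
    intro t ht1 ht2
    have htn : t - 1 < n := by omega
    have htn' : t < n := by omega
    have e1 : svalHat n π t = (wd n π (t-1) : ℤ) + 1 := by
      rw [svalHat, if_neg (by omega : ¬ t = 0), sval, dif_pos htn, wd, dif_pos htn]
    have e3 : svalHat n π (t+1) = (wd n π t : ℤ) + 1 := by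
      have h4 : t + 1 - 1 = t := by omega
      simp [svalHat, sval, wd, h4, htn']
    rcases Nat.eq_or_lt_of_le ht1 with h1 | h1
    · -- t = 1
      have ht : t = 1 := h1.symm
      subst ht
      have e2 : svalHat n π 0 = 0 := by simp [svalHat]
      rw [e1, e3, e2]
      simp only [show (1:ℕ) - 1 = 0 by rfl, show (1:ℕ) - 2 = 0 by rfl]
      constructor
      · rintro ⟨-, h⟩
        exact ⟨Or.inl trivial, by omega⟩
      · rintro ⟨-, h⟩
        exact ⟨by positivity, by omega⟩
    · -- t ≥ 2
      have ht2' : 2 ≤ t := h1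
      have e2 : svalHat n π (t-1) = (wd n π (t-2) : ℤ) + 1 := by
        have h0 : ¬ (t - 1 = 0) := by omega
        have h2 : t - 1 - 1 = t - 2 := by omega
        have h3 : t - 2 < n := by omega
        simp [svalHat, sval, wd, h0, h2, h3]
      rw [e1, e2, e3]
      have c1 : ((wd n π (t-2) : ℤ) + 1 < (wd n π (t-1) : ℤ) + 1) ↔ wd n π (t-2) < wd n π (t-1) := by
        constructor
        · intro h; exact_mod_cast (by omega : (wd n π (t-2) : ℤ) < wd n π (t-1))
        · intro h; have : (wd n π (t-2) : ℤ) < wd n π (t-1) := by exact_mod_cast h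
          omega
      have c2 : ((wd n π t : ℤ) + 1 < (wd n π (t-1) : ℤ) + 1) ↔ wd n π t < wd n π (t-1) := by
        constructor
        · intro h; exact_mod_cast (by omega : (wd n π t : ℤ) < wd n π (t-1))
        · intro h; have : (wd n π t : ℤ) < wd n π (t-1) := by exact_mod_cast h
          omega
      rw [c1, c2]
      constructor
      · rintro ⟨ha, hb⟩; exact ⟨Or.inr ha, hb⟩
      · rintro ⟨ha, hb⟩
        refine ⟨?_, hb⟩
        rcases ha with h | h
        · omega
        · exact h
  constructor
  · intro hset t ht1 ht2
    have hmem : t ∈ sPeakSetHat n π ↔ t = k := by rw [hset]; simp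
    rw [sPeakSetHat, Finset.mem_filter, Finset.mem_Icc] at hmem
    rw [← key t ht1 ht2]
    constructor
    · intro hc; exact hmem.mp ⟨⟨ht1, ht2⟩, hc⟩
    · intro hc; exact (hmem.mpr hc).2
  · intro h
    ext t
    rw [sPeakSetHat, Finset.mem_filter, Finset.mem_Icc, Finset.mem_singleton]
    constructor
    · rintro ⟨⟨ht1, ht2⟩, hc⟩
      exact (h t ht1 ht2).mp ((key t ht1 ht2).mp hc)
    · intro hteq
      subst hteq
      refine ⟨by simpa using hkIcc, (key t hk1 (by omega)).mpr ?_⟩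
      exact (h t hk1 (by omega)).mpr rfl

/-- chain an ascent property -/
lemma chain_asc {u : ℕ → ℕ} {a c : ℕ} (h : ∀ p, a ≤ p → p + 1 ≤ c → u p < u (p+1)) :
    ∀ p q, a ≤ p → p < q → q ≤ c → u p < u q := by
  intro p q hap hpq hqc
  induction q with
  | zero => omega
  | succ q ih =>
    rcases Nat.lt_or_ge p q with h' | h'
    · exact lt_trans (ih h' (by omega)) (h q (by omega) hqc)
    · have : p = q := by omega
      subst this
      exact h p hap hqc

lemma chain_desc {u : ℕ → ℕ} {a c : ℕ} (h : ∀ p, a ≤ p → p + 1 ≤ c → u (p+1) < u p) :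
    ∀ p q, a ≤ p → p < q → q ≤ c → u q < u p := by
  intro p q hap hpq hqc
  induction q with
  | zero => omega
  | succ q ih =>
    rcases Nat.lt_or_ge p q with h' | h'
    · exact lt_trans (h q (by omega) hqc) (ih h' (by omega))
    · have : p = q := by omega
      subst this
      exact h p hap hqc

/-- The shape condition: ascending to `k-1` (0-indexed), descending to `j`, ascending after. -/
def Shape (n k j : ℕ) (u : ℕ → ℕ) : Prop :=
  (∀ p, p + 1 < k → u p < u (p+1)) ∧
  (∀ p, k - 1 ≤ p → p < j → u (p+1) < u p) ∧
  (∀ p, j ≤ p → p + 1 < n → u p < u (p+1))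

lemma pkcond_of_shape {n k j : ℕ} {u : ℕ → ℕ} (hk1 : 1 ≤ k) (hkn : k < n)
    (hjk : k ≤ j) (hjn : j ≤ n - 1) (hs : Shape n k j u) : PkCond n k u := by
  obtain ⟨asc1, desc, asc2⟩ := hs
  intro t ht1 ht2
  constructor
  · rintro ⟨hl, hr⟩
    by_contra htk
    rcases Nat.lt_or_ge t k with h | h
    · -- t < k : u (t-1) < u t contradicts hr
      have : u (t-1) < u t := by
        have := asc1 (t-1) (by omega)
        rwa [Nat.sub_add_cancel ht1] at this
      omega
    · have htk' : k < t := by omega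
      rcases Nat.lt_or_ge (t-1) j with h2 | h2
      · -- descending region : u (t-1) < u (t-2) contradicts hl
        rcases hl with h3 | h3
        · omega
        · have : u (t-1) < u (t-2) := by
            have := desc (t-2) (by omega) (by omega)
            rwa [(by omega : t - 2 + 1 = t - 1)] at this
          omega
      · -- ascending region : u (t-1) < u t contradicts hr
        have : u (t-1) < u t := by
          have := asc2 (t-1) h2 (by omega)
          rwa [Nat.sub_add_cancel ht1] at this
        omega
  · intro hteq
    subst hteq
    refine ⟨?_, ?_⟩
    · rcases Nat.eq_or_lt_of_le hk1 with h | h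
      · exact Or.inl h.symm
      · refine Or.inr ?_
        have := asc1 (t-2) (by omega)
        rwa [(by omega : t - 2 + 1 = t - 1)] at this
    · have := desc (t-1) (by omega) (by omega)
      rwa [Nat.sub_add_cancel hk1] at this

lemma shape_of_pkcond {n k : ℕ} {u : ℕ → ℕ} (hk1 : 1 ≤ k) (hkn : k < n)
    (inj : ∀ p q, p < n → q < n → u p = u q → p = q)
    (h : PkCond n k u) : ∃ j, k ≤ j ∧ j ≤ n - 1 ∧ Shape n k j u := by
  have tri : ∀ p, p + 1 < n → u p ≠ u (p+1) := by
    intro p hp heq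
    have := inj p (p+1) (by omega) hp heq
    omega
  -- ascending before k
  have asc1 : ∀ p, p + 1 < k → u p < u (p+1) := by
    intro p hp
    induction p using Nat.strong_induction_on with
    | _ p ih =>
      by_contra hcon
      have hdesc : u (p+1) < u p := by
        have := tri p (by omega)
        omega
      -- peak at t = p+1
      have hpk : ((p+1 = 1 ∨ u (p+1-2) < u (p+1-1)) ∧ u (p+1) < u (p+1-1)) := by
        refine ⟨?_, by simpa using hdesc⟩
        rcases Nat.eq_zero_or_pos p with h0 | h0
        · exact Or.inl (by omega)
        · refine Or.inr ?_
          have := ih (p-1) (by omega) (by omega)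
          have e1 : p + 1 - 2 = p - 1 := by omega
          have e2 : p + 1 - 1 = p := by omega
          rw [e1, e2]
          rwa [(by omega : p - 1 + 1 = p)] at this
      have := (h (p+1) (by omega) (by omega)).mp hpk
      omega
  -- descent at k-1
  have hdk : u k < u (k-1) := by
    have := ((h k hk1 (by omega)).mpr rfl).2
    exact this
  -- define j as least p ≥ k-1 with (p ≥ n-1 or ascent at p)
  have hex : ∃ p, k - 1 ≤ p ∧ (n - 1 ≤ p ∨ u p < u (p+1)) := ⟨n-1, by omega, Or.inl le_rfl⟩
  classical
  let j := Nat.find hex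
  have hjspec : k - 1 ≤ j ∧ (n - 1 ≤ j ∨ u j < u (j+1)) := Nat.find_spec hex
  have hjmin : ∀ p, p < j → ¬ (k - 1 ≤ p ∧ (n - 1 ≤ p ∨ u p < u (p+1))) :=
    fun p hp => Nat.find_min hex hp
  have hjn : j ≤ n - 1 := by
    by_contra hc
    have := hjmin (n-1) (by omega)
    push_neg at this
    have := this (by omega)
    omega
  have hjk : k ≤ j := by
    rcases Nat.lt_or_ge j k with hc | hc
    · exfalso
      have hj1 : j = k - 1 := by omega
      rcases hjspec.2 with h2 | h2
      · omega
      · rw [hj1, Nat.sub_add_cancel hk1] at h2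
        omega
    · exact hc
  have desc : ∀ p, k - 1 ≤ p → p < j → u (p+1) < u p := by
    intro p h1 h2
    have hnm := hjmin p h2
    push_neg at hnm
    obtain ⟨hn1, hn2⟩ := hnm h1
    have := tri p (by omega)
    omega
  have asc2 : ∀ p, j ≤ p → p + 1 < n → u p < u (p+1) := by
    intro p hjp hpn
    induction p using Nat.strong_induction_on with
    | _ p ih =>
      rcases Nat.eq_or_lt_of_le hjp with he | hlt
      · -- p = j
        rcases hjspec.2 with h2 | h2
        · omega
        · rwa [he] at h2
      · -- p > j : previous ascent
        have hprev : u (p-1) < u p := by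
          have := ih (p-1) (by omega) (by omega) (by omega)
          rwa [(by omega : p - 1 + 1 = p)] at this
        by_contra hcon
        have hdesc : u (p+1) < u p := by
          have := tri p hpn
          omega
        have hpk : ((p+1 = 1 ∨ u (p+1-2) < u (p+1-1)) ∧ u (p+1) < u (p+1-1)) := by
          refine ⟨Or.inr ?_, by simpa using hdesc⟩
          have e1 : p + 1 - 2 = p - 1 := by omega
          have e2 : p + 1 - 1 = p := by omega
          rw [e1, e2]
          exact hprev
        have := (h (p+1) (by omega) (by omega)).mp hpk
        omega
  exact ⟨j, hjk, hjn, asc1, desc, asc2⟩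

/-! ### helper facts about sorted lists of finsets -/

lemma memsort {s : Finset ℕ} {x : ℕ} : x ∈ s.sort (· ≤ ·) ↔ x ∈ s :=
  Finset.mem_sort _

lemma sort_get_lt {s : Finset ℕ} {a b : ℕ} (hab : a < b) (hb : b < (s.sort (· ≤ ·)).length) :
    (s.sort (· ≤ ·))[a]'(by omega) < (s.sort (· ≤ ·))[b] :=
  List.pairwise_iff_getElem.mp (Finset.sortedLT_sort s).pairwise a b (by omega) hb hab

lemma sort_get_mem {s : Finset ℕ} {a : ℕ} (ha : a < (s.sort (· ≤ ·)).length) :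
    (s.sort (· ≤ ·))[a] ∈ s :=
  memsort.mp (List.getElem_mem ..)

lemma sort_get_last {s : Finset ℕ} {M c : ℕ} (hM : M ∈ s) (hmax : ∀ x ∈ s, x ≤ M)
    (hc : c + 1 = (s.sort (· ≤ ·)).length) : (s.sort (· ≤ ·))[c]'(by omega) = M := by
  obtain ⟨t, ht, hts⟩ := List.mem_iff_getElem.mp (memsort.mpr hM)
  have h1 : (s.sort (· ≤ ·))[c]'(by omega) ≤ M := hmax _ (sort_get_mem (by omega))
  rcases Nat.lt_or_ge t c with h | h
  · have := sort_get_lt (s := s) h (by omega)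
    rw [hts] at this
    omega
  · have : t = c := by omega
    subst this
    exact hts
  
lemma sort_get_first {s : Finset ℕ} {v : ℕ} (hv : v ∈ s) (hmin : ∀ x ∈ s, v ≤ x)
    (h0 : 0 < (s.sort (· ≤ ·)).length) : (s.sort (· ≤ ·))[0] = v := by
  obtain ⟨t, ht, hts⟩ := List.mem_iff_getElem.mp (memsort.mpr hv)
  have h1 : v ≤ (s.sort (· ≤ ·))[0] := hmin _ (sort_get_mem h0)
  rcases Nat.eq_zero_or_pos t with h | h
  · subst h; omega
  · have := sort_get_lt (s := s) h ht
    rw [hts] at this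
    omega

/-! ### the decoding data -/

def Hfs (k i : ℕ) (H' : Finset ℕ) : Finset ℕ := insert (k+i) H'

def Cs (n k i : ℕ) (H' : Finset ℕ) : Finset ℕ := Finset.range n \ Hfs k i H'

def v0 (n k i : ℕ) (H' : Finset ℕ) : ℕ :=
  if h : (Cs n k i H').Nonempty then (Cs n k i H').min' h else 0

def freeS (n k i : ℕ) (H' : Finset ℕ) : Finset ℕ :=
  (Cs n k i H').filter fun x => v0 n k i H' < x ∧ x < k + i

def Ts (n k i : ℕ) (H' S : Finset ℕ) : Finset ℕ :=
  S ∪ (Cs n k i H').filter fun x => k + i < x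

def Bs (n k i : ℕ) (H' S : Finset ℕ) : Finset ℕ := Cs n k i H' \ Ts n k i H' S

def bL (n k i : ℕ) (H' S : Finset ℕ) : List ℕ :=
  (Hfs k i H').sort (· ≤ ·) ++ ((Bs n k i H' S).sort (· ≤ ·)).reverse ++
    (Ts n k i H' S).sort (· ≤ ·)

def wL (n k i : ℕ) (H' S : Finset ℕ) (p : ℕ) : ℕ := (bL n k i H' S).getD p 0

structure Good (n k i : ℕ) (H' S : Finset ℕ) : Prop where
  hk1 : 1 ≤ k
  hkn : k < n
  hi : i < n - k
  hH1 : H' ⊆ Finset.range (k+i)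
  hH2 : H'.card = k - 1
  hS : S ⊆ freeS n k i H'

namespace Good

variable {n k i : ℕ} {H' S : Finset ℕ} (g : Good n k i H' S)
include g

lemma kin : k + i < n := by have := g.hi; have := g.hkn; omega

lemma not_memH : k + i ∉ H' := fun h => by simpa using g.hH1 h

lemma HfCard : (Hfs k i H').card = k := by
  rw [Hfs, Finset.card_insert_of_notMem g.not_memH, g.hH2]
  have := g.hk1; omega

lemma HfSub : Hfs k i H' ⊆ Finset.range n := by
  rw [Hfs]
  intro x hx
  rcases Finset.mem_insert.mp hx with h | h
  · subst h; exact Finset.mem_range.mpr g.kin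
  · exact Finset.mem_range.mpr (lt_trans (Finset.mem_range.mp (g.hH1 h)) g.kin)

lemma CsCard : (Cs n k i H').card = n - k := by
  rw [Cs, Finset.card_sdiff_of_subset g.HfSub, g.HfCard, Finset.card_range]

lemma CsNonempty : (Cs n k i H').Nonempty := by
  rw [← Finset.card_pos, g.CsCard]
  have := g.hi; omega

lemma v0_eq : v0 n k i H' = (Cs n k i H').min' g.CsNonempty := dif_pos g.CsNonempty

lemma v0_mem : v0 n k i H' ∈ Cs n k i H' := g.v0_eq ▸ Finset.min'_mem _ _

lemma v0_min : ∀ x ∈ Cs n k i H', v0 n k i H' ≤ x := fun x hx => g.v0_eq ▸ Finset.min'_le _ x hx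

lemma mem_Cs_lt {x : ℕ} (hx : x ∈ Cs n k i H') : x < n := by
  have := Finset.mem_sdiff.mp hx
  exact Finset.mem_range.mp this.1

lemma v0_lt : v0 n k i H' < k + i := by
  have hsub : Hfs k i H' ⊆ Finset.range (k+i+1) := by
    intro x hx
    rcases Finset.mem_insert.mp hx with h | h
    · subst h; exact Finset.mem_range.mpr (by omega)
    · exact Finset.mem_range.mpr (by have := Finset.mem_range.mp (g.hH1 h); omega)
  have hcard : (Finset.range (k+i+1) \ Hfs k i H').card = i + 1 := by
    rw [Finset.card_sdiff_of_subset hsub, g.HfCard, Finset.card_range]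
    have := g.hk1; omega
  have hne : (Finset.range (k+i+1) \ Hfs k i H').Nonempty := by
    rw [← Finset.card_pos, hcard]; omega
  obtain ⟨x, hx⟩ := hne
  have hx' := Finset.mem_sdiff.mp hx
  have hx1 : x < k + i + 1 := Finset.mem_range.mp hx'.1
  have hx2 : x ≠ k + i := fun h => hx'.2 (h ▸ Finset.mem_insert_self _ _)
  have hxC : x ∈ Cs n k i H' := by
    rw [Cs, Finset.mem_sdiff]
    exact ⟨Finset.mem_range.mpr (by have := g.kin; omega), hx'.2⟩
  have := g.v0_min x hxC
  omega

lemma Hf_inter : Finset.range (k+i) \ Hfs k i H' = Finset.range (k+i) \ H' := by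
  ext x
  simp only [Finset.mem_sdiff, Finset.mem_range, Hfs, Finset.mem_insert]
  constructor
  · rintro ⟨h1, h2⟩; exact ⟨h1, fun h => h2 (Or.inr h)⟩
  · rintro ⟨h1, h2⟩
    refine ⟨h1, ?_⟩
    rintro (h | h)
    · omega
    · exact h2 h

lemma freeS_eq : freeS n k i H' = (Finset.range (k+i) \ H').erase (v0 n k i H') := by
  ext x
  simp only [freeS, Finset.mem_filter, Finset.mem_erase, Finset.mem_sdiff, Finset.mem_range]
  constructor
  · rintro ⟨hxC, hv, hlt⟩
    have := Finset.mem_sdiff.mp hxC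
    refine ⟨by omega, hlt, ?_⟩
    intro hmem
    exact this.2 (Finset.mem_insert.mpr (Or.inr hmem))
  · rintro ⟨hne, hlt, hnm⟩
    have hxC : x ∈ Cs n k i H' := by
      rw [Cs, Finset.mem_sdiff, Hfs]
      refine ⟨Finset.mem_range.mpr (by have := g.kin; omega), ?_⟩
      intro hm
      rcases Finset.mem_insert.mp hm with h | h
      · omega
      · exact hnm h
    refine ⟨hxC, ?_, hlt⟩
    have := g.v0_min x hxC
    omega

lemma freeCard : (freeS n k i H').card = i := by
  rw [g.freeS_eq]
  have hv0mem : v0 n k i H' ∈ Finset.range (k+i) \ H' := by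
    rw [Finset.mem_sdiff]
    have h2 := Finset.mem_sdiff.mp g.v0_mem
    refine ⟨Finset.mem_range.mpr g.v0_lt, ?_⟩
    intro h
    exact h2.2 (Finset.mem_insert.mpr (Or.inr h))
  rw [Finset.card_erase_of_mem hv0mem, Finset.card_sdiff_of_subset g.hH1, Finset.card_range, g.hH2]
  have := g.hk1; omega

lemma S_sub_Cs : S ⊆ Cs n k i H' := fun x hx => (Finset.mem_filter.mp (g.hS hx)).1

lemma Ts_sub : Ts n k i H' S ⊆ Cs n k i H' := by
  intro x hx
  rcases Finset.mem_union.mp hx with h | h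
  · exact g.S_sub_Cs h
  · exact (Finset.mem_filter.mp h).1

lemma mem_Ts_gt {x : ℕ} (hx : x ∈ Ts n k i H' S) : v0 n k i H' < x := by
  rcases Finset.mem_union.mp hx with h | h
  · exact (Finset.mem_filter.mp (g.hS h)).2.1
  · have := (Finset.mem_filter.mp h).2
    have := g.v0_lt
    omega

lemma v0_mem_Bs : v0 n k i H' ∈ Bs n k i H' S := by
  rw [Bs, Finset.mem_sdiff]
  refine ⟨g.v0_mem, ?_⟩
  intro h
  exact absurd (g.mem_Ts_gt h) (lt_irrefl _)

lemma Bs_sub : Bs n k i H' S ⊆ Cs n k i H' := Finset.sdiff_subset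

lemma mem_Bs_lt {x : ℕ} (hx : x ∈ Bs n k i H' S) : x < k + i := by
  rw [Bs, Finset.mem_sdiff] at hx
  obtain ⟨hxC, hxT⟩ := hx
  have hne : x ≠ k + i := by
    intro h
    exact (Finset.mem_sdiff.mp hxC).2 (h ▸ Finset.mem_insert_self _ _)
  by_contra hc
  exact hxT (Finset.mem_union.mpr (Or.inr (Finset.mem_filter.mpr ⟨hxC, by omega⟩)))

lemma mem_Bs_ge {x : ℕ} (hx : x ∈ Bs n k i H' S) : v0 n k i H' ≤ x :=
  g.v0_min x (g.Bs_sub hx)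

lemma disjBT : Disjoint (Bs n k i H' S) (Ts n k i H' S) := Finset.sdiff_disjoint

lemma unionBT : Bs n k i H' S ∪ Ts n k i H' S = Cs n k i H' :=
  Finset.sdiff_union_of_subset g.Ts_sub

lemma cardBT : (Bs n k i H' S).card + (Ts n k i H' S).card = n - k := by
  rw [← Finset.card_union_of_disjoint g.disjBT, g.unionBT, g.CsCard]

lemma Bs_card_pos : 0 < (Bs n k i H' S).card :=
  Finset.card_pos.mpr ⟨_, g.v0_mem_Bs⟩

lemma bL_length : (bL n k i H' S).length = n := by
  rw [bL]
  simp only [List.length_append, List.length_reverse, Finset.length_sort]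
  rw [g.HfCard]
  have := g.cardBT
  have := g.hkn
  omega

lemma disjHC : Disjoint (Hfs k i H') (Cs n k i H') := Finset.disjoint_sdiff

lemma bL_nodup : (bL n k i H' S).Nodup := by
  rw [bL]
  rw [List.nodup_append', List.nodup_append']
  refine ⟨⟨Finset.sort_nodup _ _, List.nodup_reverse.mpr (Finset.sort_nodup _ _), ?_⟩,
    Finset.sort_nodup _ _, ?_⟩
  · intro x hx hx'
    have h1 : x ∈ Hfs k i H' := memsort.mp hx
    have h2 : x ∈ Cs n k i H' := g.Bs_sub (memsort.mp (List.mem_reverse.mp hx'))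
    exact (Finset.disjoint_left.mp g.disjHC) h1 h2
  · intro x hx hx'
    have h2 : x ∈ Ts n k i H' S := memsort.mp hx'
    rcases List.mem_append.mp hx with h | h
    · have h1 : x ∈ Hfs k i H' := memsort.mp h
      exact (Finset.disjoint_left.mp g.disjHC) h1 (g.Ts_sub h2)
    · have h1 : x ∈ Bs n k i H' S := memsort.mp (List.mem_reverse.mp h)
      exact (Finset.disjoint_left.mp g.disjBT) h1 h2

lemma bL_mem_lt : ∀ x ∈ bL n k i H' S, x < n := by
  intro x hx
  rw [bL] at hx
  rcases List.mem_append.mp hx with h | h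
  · rcases List.mem_append.mp h with h1 | h1
    · exact Finset.mem_range.mp (g.HfSub (memsort.mp h1))
    · exact g.mem_Cs_lt (g.Bs_sub (memsort.mp (List.mem_reverse.mp h1)))
  · exact g.mem_Cs_lt (g.Ts_sub (memsort.mp h))

lemma lenH : ((Hfs k i H').sort (· ≤ ·)).length = k := by
  rw [Finset.length_sort, g.HfCard]

omit g in
lemma bL_def : bL n k i H' S = (Hfs k i H').sort (· ≤ ·) ++
    ((Bs n k i H' S).sort (· ≤ ·)).reverse ++ (Ts n k i H' S).sort (· ≤ ·) := rfl

omit g in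
lemma lenB : (((Bs n k i H' S).sort (· ≤ ·)).reverse).length = (Bs n k i H' S).card := by
  rw [List.length_reverse, Finset.length_sort]

omit g in
lemma lenT : ((Ts n k i H' S).sort (· ≤ ·)).length = (Ts n k i H' S).card := Finset.length_sort _

lemma wL_eq_getElem {p : ℕ} (hp : p < n) :
    wL n k i H' S p = (bL n k i H' S)[p]'(by rw [g.bL_length]; exact hp) :=
  List.getD_eq_getElem _ 0 _

lemma wL_head {p : ℕ} (hp : p < k) :
    wL n k i H' S p = ((Hfs k i H').sort (· ≤ ·))[p]'(by rw [g.lenH]; exact hp) := by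
  rw [g.wL_eq_getElem (lt_trans hp g.hkn)]; simp only [bL_def]
  rw [List.getElem_append_left (by
        simp only [List.length_append, List.length_reverse, Finset.length_sort]
        rw [g.HfCard]; omega),
      List.getElem_append_left (by rw [g.lenH]; exact hp)]

lemma wL_mid {p : ℕ} (hk : k ≤ p) (hp : p < k + (Bs n k i H' S).card) :
    wL n k i H' S p = ((Bs n k i H' S).sort (· ≤ ·))[k + (Bs n k i H' S).card - 1 - p]'
      (by rw [Finset.length_sort]; omega) := by
  have hpn : p < n := by
    have := g.cardBT; have := g.hkn; omega
  rw [g.wL_eq_getElem hpn]; simp only [bL_def]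
  rw [List.getElem_append_left (by
      simp only [List.length_append, List.length_reverse, Finset.length_sort]
      rw [g.HfCard]; omega)]
  rw [List.getElem_append_right (by rw [g.lenH]; exact hk)]
  rw [List.getElem_reverse]
  congr 1
  rw [Finset.length_sort, g.lenH]
  omega

lemma wL_tail {p : ℕ} (hk : k + (Bs n k i H' S).card ≤ p) (hpn : p < n) :
    wL n k i H' S p = ((Ts n k i H' S).sort (· ≤ ·))[p - (k + (Bs n k i H' S).card)]'
      (by rw [Finset.length_sort]; have := g.cardBT; have := g.hkn; omega) := by
  rw [g.wL_eq_getElem hpn]; simp only [bL_def]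
  rw [List.getElem_append_right (by
      simp only [List.length_append, List.length_reverse, Finset.length_sort]
      rw [g.HfCard]; omega)]
  congr 1
  simp only [List.length_append, List.length_reverse, Finset.length_sort]
  rw [g.HfCard]

lemma wL_km1 : wL n k i H' S (k-1) = k + i := by
  rw [g.wL_head (by have := g.hk1; omega)]
  refine sort_get_last (show (k+i) ∈ Hfs k i H' from Finset.mem_insert_self _ _) ?_ (by rw [g.lenH]; have := g.hk1; omega)
  intro x hx
  rcases Finset.mem_insert.mp hx with h | h
  · omega
  · have := Finset.mem_range.mp (g.hH1 h); omega

lemma wL_k_mem : wL n k i H' S k ∈ Bs n k i H' S := by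
  rw [g.wL_mid le_rfl (by have := g.Bs_card_pos; omega)]
  exact sort_get_mem _

lemma wL_valley : wL n k i H' S (k + (Bs n k i H' S).card - 1) = v0 n k i H' := by
  have hb := g.Bs_card_pos
  have he : k + (Bs n k i H' S).card - 1 - (k + (Bs n k i H' S).card - 1) = 0 := by omega
  rw [g.wL_mid (by omega) (by omega)]
  simp only [he]
  exact sort_get_first g.v0_mem_Bs (fun x hx => g.mem_Bs_ge hx) (by rw [Finset.length_sort]; omega)

lemma shape : Shape n k (k + (Bs n k i H' S).card - 1) (wL n k i H' S) := by
  have hb := g.Bs_card_pos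
  have hbt := g.cardBT
  have hk1 := g.hk1
  have hkn := g.hkn
  refine ⟨?_, ?_, ?_⟩
  · intro p hp
    rw [g.wL_head (by omega), g.wL_head (by omega)]
    exact sort_get_lt (by omega) (by rw [g.lenH]; omega)
  · intro p hp1 hp2
    rcases Nat.lt_or_ge p k with h | h
    · -- p = k - 1
      have hpk : p = k - 1 := by omega
      have hp1' : p + 1 = k := by omega
      rw [hp1', hpk, g.wL_km1]
      exact g.mem_Bs_lt g.wL_k_mem
    · rw [g.wL_mid h (by omega), g.wL_mid (by omega) (by omega)]
      exact sort_get_lt (by omega) (by rw [Finset.length_sort]; omega)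
  · intro p hp1 hp2
    rcases Nat.eq_or_lt_of_le hp1 with h | h
    · -- p = valley
      have hpe : p + 1 = k + (Bs n k i H' S).card := by omega
      rw [hpe, ← h, g.wL_valley, g.wL_tail le_rfl (by omega)]
      refine g.mem_Ts_gt (sort_get_mem ?_)
      rw [Finset.length_sort]
      omega
    · rw [g.wL_tail (by omega) (by omega), g.wL_tail (by omega) (by omega)]
      exact sort_get_lt (by omega) (by rw [Finset.length_sort]; omega)

lemma pk : PkCond n k (wL n k i H' S) := by
  have hb := g.Bs_card_pos
  have hbt := g.cardBT
  have hkn := g.hkn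
  exact pkcond_of_shape g.hk1 g.hkn (by omega) (by omega) g.shape

lemma wL_inj {p q : ℕ} (hp : p < n) (hq : q < n) (h : wL n k i H' S p = wL n k i H' S q) :
    p = q := by
  rw [g.wL_eq_getElem hp, g.wL_eq_getElem hq] at h
  exact (List.Nodup.getElem_inj_iff g.bL_nodup).mp h

lemma Hf_eq_image : Hfs k i H' = (Finset.range k).image (wL n k i H' S) := by
  ext x
  rw [Finset.mem_image]
  constructor
  · intro hx
    obtain ⟨t, ht, hts⟩ := List.mem_iff_getElem.mp (memsort.mpr hx)
    rw [g.lenH] at ht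
    exact ⟨t, Finset.mem_range.mpr ht, by rw [g.wL_head ht]; exact hts⟩
  · rintro ⟨p, hp, rfl⟩
    have hp := Finset.mem_range.mp hp
    rw [g.wL_head hp]
    exact sort_get_mem _

lemma Ts_eq_image :
    Ts n k i H' S = (Finset.Ico (k + (Bs n k i H' S).card) n).image (wL n k i H' S) := by
  have hbt := g.cardBT
  have hkn := g.hkn
  ext x
  rw [Finset.mem_image]
  constructor
  · intro hx
    obtain ⟨t, ht, hts⟩ := List.mem_iff_getElem.mp (memsort.mpr hx)
    rw [lenT] at ht
    refine ⟨t + (k + (Bs n k i H' S).card), Finset.mem_Ico.mpr ⟨by omega, by omega⟩, ?_⟩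
    rw [g.wL_tail (by omega) (by omega)]
    have : t + (k + (Bs n k i H' S).card) - (k + (Bs n k i H' S).card) = t := by omega
    simp only [this]
    exact hts
  · rintro ⟨p, hp, rfl⟩
    obtain ⟨hp1, hp2⟩ := Finset.mem_Ico.mp hp
    rw [g.wL_tail hp1 hp2]
    exact sort_get_mem _

lemma S_eq_filter : S = (Ts n k i H' S).filter (· < k + i) := by
  ext x
  rw [Finset.mem_filter]
  constructor
  · intro hx
    exact ⟨Finset.mem_union_left _ hx, (Finset.mem_filter.mp (g.hS hx)).2.2⟩
  · rintro ⟨hx1, hx2⟩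
    rcases Finset.mem_union.mp hx1 with h | h
    · exact h
    · have := (Finset.mem_filter.mp h).2
      omega

lemma exists_perm : ∃ π : Equiv.Perm (Fin n), ∀ p, p < n → wd n π p = wL n k i H' S p := by
  have hlen := g.bL_length
  have hnd := g.bL_nodup
  let f : Fin n → Fin n := fun p =>
    ⟨(bL n k i H' S)[(p : ℕ)]'(by rw [hlen]; exact p.isLt),
     g.bL_mem_lt _ (List.getElem_mem _)⟩
  have hinj : Function.Injective f := by
    intro p q hpq
    have : (bL n k i H' S)[(p : ℕ)]'(by rw [hlen]; exact p.isLt) =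
        (bL n k i H' S)[(q : ℕ)]'(by rw [hlen]; exact q.isLt) := congrArg Fin.val hpq
    exact Fin.ext ((List.Nodup.getElem_inj_iff hnd).mp this)
  refine ⟨Equiv.ofBijective f (Finite.injective_iff_bijective.mp hinj), ?_⟩
  intro p hp
  rw [wd, dif_pos hp]
  show ((f ⟨p, hp⟩ : Fin n) : ℕ) = wL n k i H' S p
  rw [g.wL_eq_getElem hp]

end Good

/-! ### encoding: from a permutation with peak set {k} to data -/

lemma nodup_map_range' {f : ℕ → ℕ} {a len : ℕ}
    (hinj : ∀ p q, a ≤ p → p < q → q < a + len → f p ≠ f q) :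
    (List.map f (List.range' a len)).Nodup := by
  rw [List.nodup_iff_getElem?_ne_getElem?]
  intro p q hpq hq
  simp only [List.length_map, List.length_range'] at hq
  rw [List.getElem?_eq_getElem (by simp; omega), List.getElem?_eq_getElem (by simp; omega)]
  simp only [List.getElem_map, List.getElem_range', ne_eq, Option.some.injEq]
  exact hinj (a + 1 * p) (a + 1 * q) (by omega) (by omega) (by omega)

lemma toFinset_map_range' {f : ℕ → ℕ} {a len : ℕ} :
    (List.map f (List.range' a len)).toFinset = (Finset.Ico a (a+len)).image f := by
  ext x
  simp only [List.mem_toFinset, List.mem_map, Finset.mem_image, Finset.mem_Ico]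
  constructor
  · rintro ⟨y, hy, rfl⟩
    have := List.mem_range'_1.mp hy
    exact ⟨y, ⟨this.1, this.2⟩, rfl⟩
  · rintro ⟨y, hy, rfl⟩
    exact ⟨y, List.mem_range'_1.mpr ⟨hy.1, hy.2⟩, rfl⟩

lemma map_range'_eq_sort {f : ℕ → ℕ} {a len : ℕ} {s : Finset ℕ}
    (hmono : ∀ p q, a ≤ p → p < q → q < a + len → f p < f q)
    (hs : s = (Finset.Ico a (a+len)).image f) :
    List.map f (List.range' a len) = s.sort (· ≤ ·) := by
  refine (fun p s1 s2 => List.Perm.eq_of_pairwise' (r := (· ≤ ·)) s1 s2 p) ?_ ?_ ?_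
  · apply List.perm_of_nodup_nodup_toFinset_eq
    · exact nodup_map_range' (fun p q h1 h2 h3 => Nat.ne_of_lt (hmono p q h1 h2 h3))
    · exact Finset.sort_nodup _ _
    · rw [toFinset_map_range', Finset.sort_toFinset, hs]
  · rw [List.pairwise_iff_getElem]
    intro p q hp hq hpq
    simp only [List.length_map, List.length_range'] at hp hq
    simp only [List.getElem_map, List.getElem_range']
    exact le_of_lt (hmono (a + 1*p) (a + 1*q) (by omega) (by omega) (by omega))
  · exact Finset.pairwise_sort _ _

lemma map_range'_eq_sort_rev {f : ℕ → ℕ} {a len : ℕ} {s : Finset ℕ}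
    (hanti : ∀ p q, a ≤ p → p < q → q < a + len → f q < f p)
    (hs : s = (Finset.Ico a (a+len)).image f) :
    List.map f (List.range' a len) = (s.sort (· ≤ ·)).reverse := by
  have h1 : (List.map f (List.range' a len)).reverse = s.sort (· ≤ ·) := by
    refine (fun p s1 s2 => List.Perm.eq_of_pairwise' (r := (· ≤ ·)) s1 s2 p) ?_ ?_ ?_
    · apply List.perm_of_nodup_nodup_toFinset_eq
      · exact List.nodup_reverse.mpr
          (nodup_map_range' (fun p q h1 h2 h3 => Nat.ne_of_gt (hanti p q h1 h2 h3)))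
      · exact Finset.sort_nodup _ _
      · rw [List.toFinset_reverse, toFinset_map_range', Finset.sort_toFinset, hs]
    · rw [List.pairwise_reverse, List.pairwise_iff_getElem]
      intro p q hp hq hpq
      simp only [List.length_map, List.length_range'] at hp hq
      simp only [List.getElem_map, List.getElem_range']
      exact le_of_lt (hanti (a + 1*p) (a + 1*q) (by omega) (by omega) (by omega))
    · exact Finset.pairwise_sort _ _
  rw [← h1, List.reverse_reverse]

lemma surj {n k : ℕ} (hk1 : 1 ≤ k) (hkn : k < n) (π : Equiv.Perm (Fin n))
    (hπ : sPeakSetHat n π = {k}) :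
    ∃ d : (_ : ℕ) × (_ : Finset ℕ) × Finset ℕ,
      (d.1 < n - k ∧ d.2.1 ⊆ Finset.range (k + d.1) ∧ d.2.1.card = k - 1 ∧
        d.2.2 ⊆ freeS n k d.1 d.2.1) ∧
      ∀ p, p < n → wL n k d.1 d.2.1 d.2.2 p = wd n π p := by
  set u := wd n π with hu
  have hpk : PkCond n k u := (peakset_iff π hk1 hkn).mp hπ
  have hinj : ∀ p q, p < n → q < n → u p = u q → p = q := fun p q hp hq h => wd_inj π hp hq h
  obtain ⟨j, hjk, hjn, asc1, desc, asc2⟩ := shape_of_pkcond hk1 hkn hinj hpk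
  have A1 : ∀ p q, p < q → q ≤ k - 1 → u p < u q :=
    fun p q h1 h2 => chain_asc (a := 0) (c := k-1) (fun p _ hp => asc1 p (by omega)) p q (by omega) h1 h2
  have A2 : ∀ p q, k - 1 ≤ p → p < q → q ≤ j → u q < u p :=
    fun p q h1 h2 h3 => chain_desc (a := k-1) (c := j) (fun p hp hpc => desc p hp (by omega)) p q h1 h2 h3
  have A3 : ∀ p q, j ≤ p → p < q → q ≤ n - 1 → u p < u q :=
    fun p q h1 h2 h3 => chain_asc (a := j) (c := n-1) (fun p hp hpc => asc2 p hp (by omega)) p q h1 h2 h3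
  set M := u (k-1) with hM
  have hMn : M < n := wd_lt π (by omega)
  have hMlt : ∀ p, p ≤ j → p ≠ k - 1 → u p < M := by
    intro p hp hne
    rcases Nat.lt_or_ge p (k-1) with h | h
    · exact A1 p (k-1) h le_rfl
    · exact A2 (k-1) p le_rfl (by omega) hp
  have huinjOn : Set.InjOn u (Finset.range (j+1) : Set ℕ) := by
    intro x hx y hy hxy
    simp only [Finset.coe_range, Set.mem_Iio] at hx hy
    exact hinj x y (by omega) (by omega) hxy
  have hMk : k ≤ M := by
    have hsub : (Finset.range (j+1)).image u ⊆ Finset.range (M+1) := by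
      intro x hx
      obtain ⟨p, hp, rfl⟩ := Finset.mem_image.mp hx
      have hp' := Finset.mem_range.mp hp
      rcases eq_or_ne p (k-1) with h | h
      · subst h; exact Finset.mem_range.mpr (by omega)
      · exact Finset.mem_range.mpr (by have := hMlt p (by omega) h; omega)
    have hcard := Finset.card_le_card hsub
    rw [Finset.card_image_of_injOn huinjOn, Finset.card_range, Finset.card_range] at hcard
    omega
  set i := M - k with hi
  have hik : k + i = M := by omega
  set Hfπ := (Finset.range k).image u with hHfπ
  have huinjOnK : Set.InjOn u (Finset.range k : Set ℕ) := by
    intro x hx y hy hxy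
    simp only [Finset.coe_range, Set.mem_Iio] at hx hy
    exact hinj x y (by omega) (by omega) hxy
  have hHfcard : Hfπ.card = k := by
    rw [hHfπ, Finset.card_image_of_injOn huinjOnK, Finset.card_range]
  have hMmem : M ∈ Hfπ := Finset.mem_image.mpr ⟨k-1, Finset.mem_range.mpr (by omega), rfl⟩
  have hHmax : ∀ x ∈ Hfπ, x ≤ M := by
    intro x hx
    obtain ⟨p, hp, rfl⟩ := Finset.mem_image.mp hx
    have hp' := Finset.mem_range.mp hp
    rcases eq_or_ne p (k-1) with h | h
    · subst h; exact le_rfl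
    · exact le_of_lt (hMlt p (by omega) h)
  set H' := Hfπ.erase M with hH'
  have hH'sub : H' ⊆ Finset.range (k+i) := by
    intro x hx
    obtain ⟨hne, hmem⟩ := Finset.mem_erase.mp hx
    exact Finset.mem_range.mpr (by have := hHmax x hmem; omega)
  have hH'card : H'.card = k - 1 := by
    rw [hH', Finset.card_erase_of_mem hMmem, hHfcard]
  have hHfs : Hfs k i H' = Hfπ := by
    rw [Hfs, hik, hH']
    exact Finset.insert_erase hMmem
  have hCs : Cs n k i H' = (Finset.Ico k n).image u := by
    rw [Cs, hHfs]
    ext x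
    simp only [Finset.mem_sdiff, Finset.mem_range, Finset.mem_image, Finset.mem_Ico]
    constructor
    · rintro ⟨hxn, hxH⟩
      obtain ⟨p, hpn, rfl⟩ := wd_surj π hxn
      refine ⟨p, ⟨?_, hpn⟩, rfl⟩
      by_contra hc
      exact hxH (Finset.mem_image.mpr ⟨p, Finset.mem_range.mpr (by omega), rfl⟩)
    · rintro ⟨p, ⟨hp1, hp2⟩, rfl⟩
      refine ⟨wd_lt π hp2, ?_⟩
      intro hc
      obtain ⟨q, hq, hqe⟩ := Finset.mem_image.mp hc
      have := hinj q p (by have := Finset.mem_range.mp hq; omega) hp2 hqe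
      have := Finset.mem_range.mp hq
      omega
  have hujCs : u j ∈ Cs n k i H' := by
    rw [hCs]
    exact Finset.mem_image.mpr ⟨j, Finset.mem_Ico.mpr ⟨by omega, by omega⟩, rfl⟩
  have hujmin : ∀ x ∈ Cs n k i H', u j ≤ x := by
    intro x hx
    rw [hCs] at hx
    obtain ⟨p, hp, rfl⟩ := Finset.mem_image.mp hx
    obtain ⟨hp1, hp2⟩ := Finset.mem_Ico.mp hp
    rcases Nat.lt_trichotomy p j with h | h | h
    · exact le_of_lt (A2 p j (by omega) h le_rfl)
    · subst h; exact le_rfl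
    · exact le_of_lt (A3 j p le_rfl h (by omega))
  have hv0 : v0 n k i H' = u j := by
    rw [v0, dif_pos ⟨_, hujCs⟩]
    exact le_antisymm (Finset.min'_le _ _ hujCs) (Finset.le_min' _ _ _ hujmin)
  set Tπ := (Finset.Ico (j+1) n).image u with hTπ
  have hTπCs : Tπ ⊆ Cs n k i H' := by
    intro x hx
    obtain ⟨p, hp, rfl⟩ := Finset.mem_image.mp hx
    obtain ⟨hp1, hp2⟩ := Finset.mem_Ico.mp hp
    rw [hCs]
    exact Finset.mem_image.mpr ⟨p, Finset.mem_Ico.mpr ⟨by omega, hp2⟩, rfl⟩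
  set Sπ := Tπ.filter (· < k + i) with hSπ
  have hSsub : Sπ ⊆ freeS n k i H' := by
    intro x hx
    obtain ⟨hx1, hx2⟩ := Finset.mem_filter.mp hx
    rw [freeS, Finset.mem_filter]
    refine ⟨hTπCs hx1, ?_, hx2⟩
    rw [hv0]
    obtain ⟨p, hp, rfl⟩ := Finset.mem_image.mp hx1
    obtain ⟨hp1, hp2⟩ := Finset.mem_Ico.mp hp
    exact A3 j p le_rfl (by omega) (by omega)
  have hink : i < n - k := by omega
  refine ⟨⟨i, H', Sπ⟩, ⟨hink, hH'sub, hH'card, hSsub⟩, ?_⟩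
  -- the word of the decoded list equals u
  have hTs : Ts n k i H' Sπ = Tπ := by
    have hfil : (Cs n k i H').filter (fun x => k + i < x) = Tπ.filter (fun x => k + i < x) := by
      ext x
      simp only [Finset.mem_filter]
      constructor
      · rintro ⟨hx1, hx2⟩
        have hx1' := hx1
        rw [hCs] at hx1'
        obtain ⟨p, hp, rfl⟩ := Finset.mem_image.mp hx1'
        obtain ⟨hp1, hp2⟩ := Finset.mem_Ico.mp hp
        refine ⟨Finset.mem_image.mpr ⟨p, Finset.mem_Ico.mpr ⟨?_, hp2⟩, rfl⟩, hx2⟩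
        by_contra hc
        rcases eq_or_ne p (k-1) with h | h
        · omega
        · have := hMlt p (by omega) h; omega
      · rintro ⟨hx1, hx2⟩
        exact ⟨hTπCs hx1, hx2⟩
    rw [Ts, hSπ, hfil]
    ext x
    simp only [Finset.mem_union, Finset.mem_filter]
    constructor
    · rintro (⟨h, -⟩ | ⟨h, -⟩) <;> exact h
    · intro hx
      have hne : x ≠ k + i := by
        obtain ⟨p, hp, rfl⟩ := Finset.mem_image.mp hx
        obtain ⟨hp1, hp2⟩ := Finset.mem_Ico.mp hp
        intro hc
        have := hinj p (k-1) hp2 (by omega) (by rw [hc, hik])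
        omega
      rcases Nat.lt_or_ge x (k+i) with h | h
      · exact Or.inl ⟨hx, h⟩
      · exact Or.inr ⟨hx, by omega⟩
  have hBs : Bs n k i H' Sπ = (Finset.Icc k j).image u := by
    rw [Bs, hTs, hCs]
    ext x
    simp only [Finset.mem_sdiff, Finset.mem_image, Finset.mem_Ico, Finset.mem_Icc]
    constructor
    · rintro ⟨⟨p, ⟨hp1, hp2⟩, rfl⟩, hxT⟩
      refine ⟨p, ⟨hp1, ?_⟩, rfl⟩
      by_contra hc
      exact hxT (Finset.mem_image.mpr ⟨p, Finset.mem_Ico.mpr ⟨by omega, hp2⟩, rfl⟩)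
    · rintro ⟨p, ⟨hp1, hp2⟩, rfl⟩
      refine ⟨⟨p, ⟨hp1, by omega⟩, rfl⟩, ?_⟩
      intro hc
      obtain ⟨q, hq, hqe⟩ := Finset.mem_image.mp hc
      obtain ⟨hq1, hq2⟩ := Finset.mem_Ico.mp hq
      have := hinj q p hq2 (by omega) hqe
      omega
  -- list equality
  have hl1 : List.map u (List.range' 0 k) = (Hfs k i H').sort (· ≤ ·) := by
    apply map_range'_eq_sort
    · intro p q h1 h2 h3
      exact A1 p q h2 (by omega)
    · rw [hHfs, hHfπ]
      congr 1
      rw [Finset.range_eq_Ico]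
      congr 1
      omega
  have hl2 : List.map u (List.range' k (j+1-k)) = ((Bs n k i H' Sπ).sort (· ≤ ·)).reverse := by
    apply map_range'_eq_sort_rev
    · intro p q h1 h2 h3
      exact A2 p q (by omega) h2 (by omega)
    · rw [hBs]
      congr 1
      rw [show k + (j+1-k) = j+1 by omega]
      ext x; simp only [Finset.mem_Ico, Finset.mem_Icc]; omega
  have hl3 : List.map u (List.range' (j+1) (n-1-j)) = (Ts n k i H' Sπ).sort (· ≤ ·) := by
    apply map_range'_eq_sort
    · intro p q h1 h2 h3
      exact A3 p q (by omega) h2 (by omega)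
    · rw [hTs, hTπ]
      congr 2
      omega
  have hbL : bL n k i H' Sπ = List.map u (List.range n) := by
    rw [Good.bL_def, ← hl1, ← hl2, ← hl3, ← List.map_append, ← List.map_append]
    congr 1
    rw [List.range_eq_range']
    have e1 : List.range' 0 k ++ List.range' k (j+1-k) = List.range' 0 (j+1) := by
      have : List.range' 0 k 1 ++ List.range' (0 + 1 * k) (j+1-k) 1 = List.range' 0 (k + (j+1-k)) 1 := List.range'_append
      simp only [one_mul, Nat.zero_add] at this
      rw [this]
      congr 1
      omega
    rw [e1]
    have : List.range' 0 (j+1) 1 ++ List.range' (0 + 1 * (j+1)) (n-1-j) 1 = List.range' 0 ((j+1) + (n-1-j)) 1 := List.range'_append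
    simp only [one_mul, Nat.zero_add] at this
    rw [this]
    congr 1
    omega
  intro p hp
  rw [wL, hbL, List.getD_eq_getElem _ 0 (by simp [hp]), List.getElem_map, List.getElem_range]

def dataSet (n k : ℕ) : Finset ((_ : ℕ) × (_ : Finset ℕ) × Finset ℕ) :=
  (Finset.range (n-k)).sigma fun i =>
    ((Finset.range (k+i)).powersetCard (k-1)).sigma fun H' => (freeS n k i H').powerset

lemma mem_dataSet_iff {n k : ℕ} {d : (_ : ℕ) × (_ : Finset ℕ) × Finset ℕ} :
    d ∈ dataSet n k ↔ d.1 < n - k ∧ d.2.1 ⊆ Finset.range (k + d.1) ∧ d.2.1.card = k - 1 ∧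
      d.2.2 ⊆ freeS n k d.1 d.2.1 := by
  obtain ⟨i, H', S⟩ := d
  rw [dataSet, Finset.mem_sigma, Finset.mem_sigma, Finset.mem_powersetCard,
    Finset.mem_powerset, Finset.mem_range]
  tauto

lemma good_of_mem {n k : ℕ} (hk1 : 1 ≤ k) (hkn : k < n)
    {d : (_ : ℕ) × (_ : Finset ℕ) × Finset ℕ} (hd : d ∈ dataSet n k) :
    Good n k d.1 d.2.1 d.2.2 := by
  obtain ⟨h1, h2, h3, h4⟩ := mem_dataSet_iff.mp hd
  exact ⟨hk1, hkn, h1, h2, h3, h4⟩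

lemma pkcond_congr {n k : ℕ} {u v : ℕ → ℕ} (h : ∀ p, p < n → u p = v p)
    (hkn : k < n) (hu : PkCond n k u) : PkCond n k v := by
  intro t ht1 ht2
  rw [← h (t-2) (by omega), ← h (t-1) (by omega), ← h t (by omega)]
  exact hu t ht1 ht2

lemma perm_eq_of_wd {n : ℕ} {σ π : Equiv.Perm (Fin n)}
    (h : ∀ p, p < n → wd n σ p = wd n π p) : σ = π := by
  apply Equiv.ext
  intro x
  apply Fin.ext
  have := h x.val x.isLt
  rwa [wd, wd, dif_pos x.isLt, dif_pos x.isLt, Fin.eta] at this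

noncomputable def decode {n k : ℕ} (hk1 : 1 ≤ k) (hkn : k < n)
    (d : (_ : ℕ) × (_ : Finset ℕ) × Finset ℕ) (hd : d ∈ dataSet n k) : Equiv.Perm (Fin n) :=
  ((good_of_mem hk1 hkn hd).exists_perm).choose

lemma decode_spec {n k : ℕ} (hk1 : 1 ≤ k) (hkn : k < n)
    (d : (_ : ℕ) × (_ : Finset ℕ) × Finset ℕ) (hd : d ∈ dataSet n k) :
    ∀ p, p < n → wd n (decode hk1 hkn d hd) p = wL n k d.1 d.2.1 d.2.2 p :=
  ((good_of_mem hk1 hkn hd).exists_perm).choose_spec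

lemma decode_peak {n k : ℕ} (hk1 : 1 ≤ k) (hkn : k < n)
    (d : (_ : ℕ) × (_ : Finset ℕ) × Finset ℕ) (hd : d ∈ dataSet n k) :
    sPeakSetHat n (decode hk1 hkn d hd) = {k} := by
  rw [peakset_iff _ hk1 hkn]
  exact pkcond_congr (fun p hp => ((decode_spec hk1 hkn d hd) p hp).symm) hkn
    (good_of_mem hk1 hkn hd).pk

lemma decode_inj {n k : ℕ} (hk1 : 1 ≤ k) (hkn : k < n)
    (d₁ : (_ : ℕ) × (_ : Finset ℕ) × Finset ℕ) (hd₁ : d₁ ∈ dataSet n k)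
    (d₂ : (_ : ℕ) × (_ : Finset ℕ) × Finset ℕ) (hd₂ : d₂ ∈ dataSet n k)
    (heq : decode hk1 hkn d₁ hd₁ = decode hk1 hkn d₂ hd₂) : d₁ = d₂ := by
  have g₁ := good_of_mem hk1 hkn hd₁
  have g₂ := good_of_mem hk1 hkn hd₂
  obtain ⟨i₁, H₁, S₁⟩ := d₁
  obtain ⟨i₂, H₂, S₂⟩ := d₂
  simp only at g₁ g₂
  have hw : ∀ p, p < n → wL n k i₁ H₁ S₁ p = wL n k i₂ H₂ S₂ p := by
    intro p hp
    have h1 := decode_spec hk1 hkn _ hd₁ p hp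
    have h2 := decode_spec hk1 hkn _ hd₂ p hp
    simp only at h1 h2
    rw [← h1, ← h2, heq]
  -- i equal
  have hieq : i₁ = i₂ := by
    have := hw (k-1) (by omega)
    rw [g₁.wL_km1, g₂.wL_km1] at this
    omega
  subst hieq
  -- H equal
  have hHf : Hfs k i₁ H₁ = Hfs k i₁ H₂ := by
    rw [g₁.Hf_eq_image, g₂.Hf_eq_image]
    apply Finset.image_congr
    intro p hp
    simp only [Finset.coe_range, Set.mem_Iio] at hp
    exact hw p (by omega)
  have hHeq : H₁ = H₂ := by
    have h1 : H₁ = (Hfs k i₁ H₁).erase (k + i₁) := (Finset.erase_insert g₁.not_memH).symm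
    have h2 : H₂ = (Hfs k i₁ H₂).erase (k + i₁) := (Finset.erase_insert g₂.not_memH).symm
    rw [h1, h2, hHf]
  subst hHeq
  -- card of B equal
  have hbcard : (Bs n k i₁ H₁ S₁).card = (Bs n k i₁ H₁ S₂).card := by
    have hb₁ := g₁.Bs_card_pos
    have hb₂ := g₂.Bs_card_pos
    have hbt₁ := g₁.cardBT
    have hbt₂ := g₂.cardBT
    have h1 := g₁.wL_valley
    have h2 := g₂.wL_valley
    have hv : wL n k i₁ H₁ S₁ (k + (Bs n k i₁ H₁ S₁).card - 1) =
        wL n k i₁ H₁ S₁ (k + (Bs n k i₁ H₁ S₂).card - 1) := by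
      rw [h1, hw _ (by omega), h2]
    have := g₁.wL_inj (p := k + (Bs n k i₁ H₁ S₁).card - 1)
      (q := k + (Bs n k i₁ H₁ S₂).card - 1) (by omega) (by omega) hv
    omega
  -- T equal
  have hTeq : Ts n k i₁ H₁ S₁ = Ts n k i₁ H₁ S₂ := by
    rw [g₁.Ts_eq_image, g₂.Ts_eq_image, ← hbcard]
    apply Finset.image_congr
    intro p hp
    simp only [Finset.coe_Ico, Set.mem_Ico] at hp
    exact hw p hp.2
  have hSeq : S₁ = S₂ := by
    rw [g₁.S_eq_filter, g₂.S_eq_filter, hTeq]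
  subst hSeq
  rfl

lemma card_eq {n k : ℕ} (hk1 : 1 ≤ k) (hkn : k < n) :
    PPhat n {k} = (dataSet n k).card := by
  rw [PPhat]
  refine (Finset.card_bij (fun d hd => decode hk1 hkn d hd) ?_ ?_ ?_).symm
  · intro d hd
    rw [Finset.mem_filter]
    exact ⟨Finset.mem_univ _, decode_peak hk1 hkn d hd⟩
  · exact fun d₁ hd₁ d₂ hd₂ h => decode_inj hk1 hkn d₁ hd₁ d₂ hd₂ h
  · intro π hπ
    rw [Finset.mem_filter] at hπ
    obtain ⟨d, hdmem, hword⟩ := surj hk1 hkn π hπ.2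
    have hd : d ∈ dataSet n k := mem_dataSet_iff.mpr hdmem
    refine ⟨d, hd, ?_⟩
    apply perm_eq_of_wd
    intro p hp
    rw [decode_spec hk1 hkn d hd p hp, hword p hp]

lemma dataSet_card {n k : ℕ} (hk1 : 1 ≤ k) (hkn : k < n) :
    (dataSet n k).card = ∑ i ∈ Finset.range (n-k), (k+i).choose (k-1) * 2 ^ i := by
  rw [dataSet, Finset.card_sigma]
  apply Finset.sum_congr rfl
  intro i hi
  rw [Finset.card_sigma]
  have hterm : ∀ H' ∈ (Finset.range (k+i)).powersetCard (k-1),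
      ((freeS n k i H').powerset).card = 2 ^ i := by
    intro H' hH'
    rw [Finset.mem_powersetCard] at hH'
    have g : Good n k i H' ∅ :=
      ⟨hk1, hkn, Finset.mem_range.mp hi, hH'.1, hH'.2, Finset.empty_subset _⟩
    rw [Finset.card_powerset, g.freeCard]
  rw [Finset.sum_congr rfl hterm, Finset.sum_const, Finset.card_powersetCard,
    Finset.card_range, smul_eq_mul]

end Stmt18

/-- `#P̂({n-m},n) = Σ_{i=0}^{m-1} 2^i·C(n-(m-i), i+1)`. -/
theorem stmt18 (n m : ℕ) (h1 : 1 ≤ m) (hm : m ≤ n - 1) :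
    PPhat n {n - m} = ∑ i ∈ Finset.range m, 2 ^ i * Nat.choose (n - (m - i)) (i + 1) := by
  set k := n - m with hk
  have hk1 : 1 ≤ k := by omega
  have hkn : k < n := by omega
  have hnk : n - k = m := by omega
  rw [Stmt18.card_eq hk1 hkn, Stmt18.dataSet_card hk1 hkn, hnk]
  apply Finset.sum_congr rfl
  intro i hi
  have hi' := Finset.mem_range.mp hi
  have e1 : n - (m - i) = k + i := by omega
  have e2 : k + i - (i + 1) = k - 1 := by omega
  rw [e1, Nat.mul_comm (Nat.choose (k+i) (k-1)) (2^i)]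
  congr 1
  rw [← e2, Nat.choose_symm (by omega : i + 1 ≤ k + i)]
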